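/- Let P₁,…,P₄ ∈ ℝ² and let Φ, B, J be the associated bilinear map, its Jacobian matrix and determinant. Let U ⊆ ℝ² be an open set on which Φ is injective and J(x̂) ≠ 0 for all x̂ ∈ U, let p̂ : ℝ² → ℝ² be differentiable on U, and let p : ℝ² → ℝ² be a vector field differentiable at every point of Φ(U) such that p(Φ(x̂)) = (B(x̂)⁻¹)ᵀ·p̂(x̂) for all x̂ ∈ U (the contravariant/Piola transform). Then for every x̂₀ ∈ U, (∇×p)(Φ(x̂₀)) = J(x̂₀)⁻¹·(∇×p̂)(x̂₀). -/

import Mathlib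

/-- Entry `B₁₁` of the Jacobian matrix of the bilinear map: `(x₂₁(1−ŷ) + x₃₄(1+ŷ))/4`. -/
noncomputable def B11 (x1 x2 x3 x4 yh : ℝ) : ℝ :=
  ((x2 - x1) * (1 - yh) + (x3 - x4) * (1 + yh)) / 4

/-- Entry `B₁₂`: `(x₄₁(1−x̂) + x₃₂(1+x̂))/4`. -/
noncomputable def B12 (x1 x2 x3 x4 xh : ℝ) : ℝ :=
  ((x4 - x1) * (1 - xh) + (x3 - x2) * (1 + xh)) / 4

/-- Entry `B₂₁`: `(y₂₁(1−ŷ) + y₃₄(1+ŷ))/4`. -/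
noncomputable def B21 (y1 y2 y3 y4 yh : ℝ) : ℝ :=
  ((y2 - y1) * (1 - yh) + (y3 - y4) * (1 + yh)) / 4

/-- Entry `B₂₂`: `(y₄₁(1−x̂) + y₃₂(1+x̂))/4`. -/
noncomputable def B22 (y1 y2 y3 y4 xh : ℝ) : ℝ :=
  ((y4 - y1) * (1 - xh) + (y3 - y2) * (1 + xh)) / 4

/-- The Jacobian determinant `J(x̂,ŷ) = det B(x̂,ŷ)` of the bilinear map. -/
noncomputable def Jdet (x1 x2 x3 x4 y1 y2 y3 y4 xh yh : ℝ) : ℝ :=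
  B11 x1 x2 x3 x4 yh * B22 y1 y2 y3 y4 xh - B12 x1 x2 x3 x4 xh * B21 y1 y2 y3 y4 yh

/-- Scalar curl of a planar vector field: `∇×u = ∂u₂/∂x̂ − ∂u₁/∂ŷ`. -/
noncomputable def scurl (u : ℝ × ℝ → ℝ × ℝ) (z : ℝ × ℝ) : ℝ :=
  deriv (fun t => (u (t, z.2)).2) z.1 - deriv (fun t => (u (z.1, t)).1) z.2

/-- The bilinear map `Φ(x̂,ŷ) = σ₁P₁ + σ₂P₂ + σ₃P₃ + σ₄P₄`. -/
noncomputable def Phi (x1 x2 x3 x4 y1 y2 y3 y4 : ℝ) (z : ℝ × ℝ) : ℝ × ℝ :=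
  ((1 - z.1) * (1 - z.2) / 4 * x1 + (1 + z.1) * (1 - z.2) / 4 * x2 +
     (1 + z.1) * (1 + z.2) / 4 * x3 + (1 - z.1) * (1 + z.2) / 4 * x4,
   (1 - z.1) * (1 - z.2) / 4 * y1 + (1 + z.1) * (1 - z.2) / 4 * y2 +
     (1 + z.1) * (1 + z.2) / 4 * y3 + (1 - z.1) * (1 + z.2) / 4 * y4)

lemma hasDerivAt_affine (k m x : ℝ) : HasDerivAt (fun s : ℝ => s * k + m) k x := by
  simpa using ((hasDerivAt_id x).mul_const k).add_const m

lemma HasDerivAt.congr_fun' {E : Type*} [NormedAddCommGroup E] [NormedSpace ℝ E]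
    {f g : ℝ → E} {k : E} {x : ℝ} (h : HasDerivAt g k x) (he : ∀ y, f y = g y) :
    HasDerivAt f k x := by
  have : f = g := funext he
  rw [this]; exact h

lemma hd_line1 (f : ℝ × ℝ → ℝ × ℝ) (w : ℝ × ℝ) (hf : DifferentiableAt ℝ f w) :
    HasDerivAt (fun x => f (x, w.2)) (fderiv ℝ f w (1, 0)) w.1 := by
  have h1 : HasDerivAt (fun x : ℝ => (x, w.2)) ((1:ℝ), (0:ℝ)) w.1 :=
    (hasDerivAt_id _).prodMk (hasDerivAt_const _ _)
  exact hf.hasFDerivAt.comp_hasDerivAt w.1 h1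

lemma hd_line2 (f : ℝ × ℝ → ℝ × ℝ) (w : ℝ × ℝ) (hf : DifferentiableAt ℝ f w) :
    HasDerivAt (fun y => f (w.1, y)) (fderiv ℝ f w (0, 1)) w.2 := by
  have h1 : HasDerivAt (fun y : ℝ => (w.1, y)) ((0:ℝ), (1:ℝ)) w.2 :=
    (hasDerivAt_const _ _).prodMk (hasDerivAt_id _)
  exact hf.hasFDerivAt.comp_hasDerivAt w.2 h1

lemma HasDerivAt.fstR {g : ℝ → ℝ × ℝ} {g' : ℝ × ℝ} {x : ℝ} (h : HasDerivAt g g' x) :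
    HasDerivAt (fun s => (g s).1) g'.1 x := by
  exact (ContinuousLinearMap.fst ℝ ℝ ℝ).hasFDerivAt.comp_hasDerivAt x h

lemma HasDerivAt.sndR {g : ℝ → ℝ × ℝ} {g' : ℝ × ℝ} {x : ℝ} (h : HasDerivAt g g' x) :
    HasDerivAt (fun s => (g s).2) g'.2 x := by
  exact (ContinuousLinearMap.snd ℝ ℝ ℝ).hasFDerivAt.comp_hasDerivAt x h

lemma clm_fst (L : ℝ × ℝ →L[ℝ] ℝ × ℝ) (k l : ℝ) :
    (L (k, l)).1 = k * (L (1, 0)).1 + l * (L (0, 1)).1 := by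
  have h : ((k, l) : ℝ × ℝ) = k • ((1:ℝ), (0:ℝ)) + l • ((0:ℝ), (1:ℝ)) := by
    simp [Prod.ext_iff]
  rw [h, map_add, map_smul, map_smul]
  simp

lemma clm_snd (L : ℝ × ℝ →L[ℝ] ℝ × ℝ) (k l : ℝ) :
    (L (k, l)).2 = k * (L (1, 0)).2 + l * (L (0, 1)).2 := by
  have h : ((k, l) : ℝ × ℝ) = k • ((1:ℝ), (0:ℝ)) + l • ((0:ℝ), (1:ℝ)) := by
    simp [Prod.ext_iff]
  rw [h, map_add, map_smul, map_smul]
  simp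

lemma piola_key (b11 b12 b21 b22 al be u v ux uy vx vy a b c d : ℝ)
    (hJ0 : b11 * b22 - b12 * b21 ≠ 0)
    (E1 : b11 * a + b21 * b =
      ((be * u + b22 * ux - b21 * vx) * (b11 * b22 - b12 * b21) -
        (b22 * u - b21 * v) * (b11 * be - al * b21)) / (b11 * b22 - b12 * b21) ^ 2)
    (E2 : b11 * c + b21 * d =
      ((-al * u - b12 * ux + b11 * vx) * (b11 * b22 - b12 * b21) -
        (-b12 * u + b11 * v) * (b11 * be - al * b21)) / (b11 * b22 - b12 * b21) ^ 2)
    (E3 : b12 * a + b22 * b =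
      ((b22 * uy - be * v - b21 * vy) * (b11 * b22 - b12 * b21) -
        (b22 * u - b21 * v) * (al * b22 - b12 * be)) / (b11 * b22 - b12 * b21) ^ 2)
    (E4 : b12 * c + b22 * d =
      ((-b12 * uy + al * v + b11 * vy) * (b11 * b22 - b12 * b21) -
        (-b12 * u + b11 * v) * (al * b22 - b12 * be)) / (b11 * b22 - b12 * b21) ^ 2) :
    c - b = (b11 * b22 - b12 * b21)⁻¹ * (vx - uy) := by
  have hc : c * (b11 * b22 - b12 * b21) =
      b22 * (((-al * u - b12 * ux + b11 * vx) * (b11 * b22 - b12 * b21) -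
        (-b12 * u + b11 * v) * (b11 * be - al * b21)) / (b11 * b22 - b12 * b21) ^ 2) -
      b21 * (((-b12 * uy + al * v + b11 * vy) * (b11 * b22 - b12 * b21) -
        (-b12 * u + b11 * v) * (al * b22 - b12 * be)) / (b11 * b22 - b12 * b21) ^ 2) := by
    linear_combination b22 * E2 - b21 * E4
  have hb : b * (b11 * b22 - b12 * b21) =
      b11 * (((b22 * uy - be * v - b21 * vy) * (b11 * b22 - b12 * b21) -
        (b22 * u - b21 * v) * (al * b22 - b12 * be)) / (b11 * b22 - b12 * b21) ^ 2) -
      b12 * (((be * u + b22 * ux - b21 * vx) * (b11 * b22 - b12 * b21) -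
        (b22 * u - b21 * v) * (b11 * be - al * b21)) / (b11 * b22 - b12 * b21) ^ 2) := by
    linear_combination b11 * E3 - b12 * E1
  have hkey : (c - b) * (b11 * b22 - b12 * b21) = vx - uy := by
    rw [sub_mul, hc, hb]
    simp only [mul_div_assoc', div_sub_div_same]
    rw [div_eq_iff (pow_ne_zero 2 hJ0)]
    ring
  field_simp
  linear_combination hkey

lemma scurl_eq (f : ℝ × ℝ → ℝ × ℝ) (w : ℝ × ℝ) (hf : DifferentiableAt ℝ f w) :
    scurl f w = (fderiv ℝ f w (1, 0)).2 - (fderiv ℝ f w (0, 1)).1 := by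
  unfold scurl
  rw [((hd_line1 f w hf).sndR).deriv, ((hd_line2 f w hf).fstR).deriv]

/-- If `p ∘ Φ = (B⁻¹)ᵀ p̂` (contravariant/Piola transform, written here componentwise via the
adjugate formula `(B⁻¹)ᵀ = J⁻¹·[[B₂₂,−B₂₁],[−B₁₂,B₁₁]]`) on an open set `U` on which `Φ` is
injective and `J ≠ 0`, then `(∇×p)(Φ(x̂₀)) = J(x̂₀)⁻¹·(∇×p̂)(x̂₀)` for every `x̂₀ ∈ U`. -/
theorem piola_curl_transform (x1 x2 x3 x4 y1 y2 y3 y4 : ℝ) (U : Set (ℝ × ℝ))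
    (hU : IsOpen U)
    (hinj : Set.InjOn (Phi x1 x2 x3 x4 y1 y2 y3 y4) U)
    (hJ : ∀ z ∈ U, Jdet x1 x2 x3 x4 y1 y2 y3 y4 z.1 z.2 ≠ 0)
    (phat p : ℝ × ℝ → ℝ × ℝ)
    (hphat : ∀ z ∈ U, DifferentiableAt ℝ phat z)
    (hp : ∀ w ∈ Phi x1 x2 x3 x4 y1 y2 y3 y4 '' U, DifferentiableAt ℝ p w)
    (hpiola : ∀ z ∈ U,
      p (Phi x1 x2 x3 x4 y1 y2 y3 y4 z) =
        ((B22 y1 y2 y3 y4 z.1 * (phat z).1 - B21 y1 y2 y3 y4 z.2 * (phat z).2) /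
            Jdet x1 x2 x3 x4 y1 y2 y3 y4 z.1 z.2,
         (-(B12 x1 x2 x3 x4 z.1) * (phat z).1 + B11 x1 x2 x3 x4 z.2 * (phat z).2) /
            Jdet x1 x2 x3 x4 y1 y2 y3 y4 z.1 z.2))
    (z0 : ℝ × ℝ) (hz0 : z0 ∈ U) :
    scurl p (Phi x1 x2 x3 x4 y1 y2 y3 y4 z0) =
      (Jdet x1 x2 x3 x4 y1 y2 y3 y4 z0.1 z0.2)⁻¹ * scurl phat z0 := by
  
  obtain ⟨s, t⟩ := z0
  have hz : ((s, t) : ℝ × ℝ) ∈ U := hz0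
  have hJst : Jdet x1 x2 x3 x4 y1 y2 y3 y4 s t ≠ 0 := hJ (s, t) hz
  have hJ0 : (B11 x1 x2 x3 x4 t * B22 y1 y2 y3 y4 s - B12 x1 x2 x3 x4 s * B21 y1 y2 y3 y4 t) ≠ 0 := by simpa only [Jdet] using hJst
  have hpw : DifferentiableAt ℝ p (Phi x1 x2 x3 x4 y1 y2 y3 y4 (s, t)) := hp _ ⟨(s, t), hz, rfl⟩
  have hph : DifferentiableAt ℝ phat (s, t) := hphat (s, t) hz
  -- line derivatives of phat
  have hu1 : HasDerivAt (fun x => (phat (x, t)).1) ((fderiv ℝ phat (s, t) (1, 0)).1) s := (hd_line1 phat (s, t) hph).fstR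
  have hv1 : HasDerivAt (fun x => (phat (x, t)).2) ((fderiv ℝ phat (s, t) (1, 0)).2) s := (hd_line1 phat (s, t) hph).sndR
  have hu2 : HasDerivAt (fun y => (phat (s, y)).1) ((fderiv ℝ phat (s, t) (0, 1)).1) t := (hd_line2 phat (s, t) hph).fstR
  have hv2 : HasDerivAt (fun y => (phat (s, y)).2) ((fderiv ℝ phat (s, t) (0, 1)).2) t := (hd_line2 phat (s, t) hph).sndR
  -- affine derivatives of the matrix entries
  have hB22x : HasDerivAt (fun x => B22 y1 y2 y3 y4 x) ((y1 - y2 + y3 - y4) / 4) s :=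
    (hasDerivAt_affine _ ((y4 - y1 + (y3 - y2)) / 4) s).congr_fun'
      (fun w => by simp only [B22]; ring)
  have hB12x : HasDerivAt (fun x => B12 x1 x2 x3 x4 x) ((x1 - x2 + x3 - x4) / 4) s :=
    (hasDerivAt_affine _ ((x4 - x1 + (x3 - x2)) / 4) s).congr_fun'
      (fun w => by simp only [B12]; ring)
  have hB11y : HasDerivAt (fun y => B11 x1 x2 x3 x4 y) ((x1 - x2 + x3 - x4) / 4) t :=
    (hasDerivAt_affine _ ((x2 - x1 + (x3 - x4)) / 4) t).congr_fun'
      (fun w => by simp only [B11]; ring)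
  have hB21y : HasDerivAt (fun y => B21 y1 y2 y3 y4 y) ((y1 - y2 + y3 - y4) / 4) t :=
    (hasDerivAt_affine _ ((y2 - y1 + (y3 - y4)) / 4) t).congr_fun'
      (fun w => by simp only [B21]; ring)
  -- derivatives of the Jacobian determinant along the two lines
  have hJx : HasDerivAt (fun x => Jdet x1 x2 x3 x4 y1 y2 y3 y4 x t) (B11 x1 x2 x3 x4 t * ((y1 - y2 + y3 - y4) / 4) - ((x1 - x2 + x3 - x4) / 4) * B21 y1 y2 y3 y4 t) s := by
    have h := (hB22x.const_mul (B11 x1 x2 x3 x4 t)).sub (hB12x.mul_const (B21 y1 y2 y3 y4 t))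
    exact h
  have hJy : HasDerivAt (fun y => Jdet x1 x2 x3 x4 y1 y2 y3 y4 s y) (((x1 - x2 + x3 - x4) / 4) * B22 y1 y2 y3 y4 s - B12 x1 x2 x3 x4 s * ((y1 - y2 + y3 - y4) / 4)) t := by
    have h := (hB11y.mul_const (B22 y1 y2 y3 y4 s)).sub (hB21y.const_mul (B12 x1 x2 x3 x4 s))
    exact h
  -- eventual membership
  have hUx : ∀ᶠ x in nhds s, ((x, t) : ℝ × ℝ) ∈ U := by
    have hc : ContinuousAt (fun x : ℝ => ((x, t) : ℝ × ℝ)) s :=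
      (continuous_id.prodMk continuous_const).continuousAt
    exact hc.preimage_mem_nhds (hU.mem_nhds hz)
  have hUy : ∀ᶠ y in nhds t, ((s, y) : ℝ × ℝ) ∈ U := by
    have hc : ContinuousAt (fun y : ℝ => ((s, y) : ℝ × ℝ)) t :=
      (continuous_const.prodMk continuous_id).continuousAt
    exact hc.preimage_mem_nhds (hU.mem_nhds hz)
  -- eventual equalities from the Piola relation
  have hev1 : (fun x => (p (Phi x1 x2 x3 x4 y1 y2 y3 y4 (x, t))).1) =ᶠ[nhds s] (fun x => (B22 y1 y2 y3 y4 x * (phat (x, t)).1 - B21 y1 y2 y3 y4 t * (phat (x, t)).2) / Jdet x1 x2 x3 x4 y1 y2 y3 y4 x t) :=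
    hUx.mono fun x hx => by simp only [hpiola (x, t) hx]
  have hev2 : (fun x => (p (Phi x1 x2 x3 x4 y1 y2 y3 y4 (x, t))).2) =ᶠ[nhds s] (fun x => (-(B12 x1 x2 x3 x4 x) * (phat (x, t)).1 + B11 x1 x2 x3 x4 t * (phat (x, t)).2) / Jdet x1 x2 x3 x4 y1 y2 y3 y4 x t) :=
    hUx.mono fun x hx => by simp only [hpiola (x, t) hx]
  have hev3 : (fun y => (p (Phi x1 x2 x3 x4 y1 y2 y3 y4 (s, y))).1) =ᶠ[nhds t] (fun y => (B22 y1 y2 y3 y4 s * (phat (s, y)).1 - B21 y1 y2 y3 y4 y * (phat (s, y)).2) / Jdet x1 x2 x3 x4 y1 y2 y3 y4 s y) :=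
    hUy.mono fun y hy => by simp only [hpiola (s, y) hy]
  have hev4 : (fun y => (p (Phi x1 x2 x3 x4 y1 y2 y3 y4 (s, y))).2) =ᶠ[nhds t] (fun y => (-(B12 x1 x2 x3 x4 s) * (phat (s, y)).1 + B11 x1 x2 x3 x4 y * (phat (s, y)).2) / Jdet x1 x2 x3 x4 y1 y2 y3 y4 s y) :=
    hUy.mono fun y hy => by simp only [hpiola (s, y) hy]
  -- explicit derivatives of the transform formula along the two lines
  have hF1x : HasDerivAt (fun x => (B22 y1 y2 y3 y4 x * (phat (x, t)).1 - B21 y1 y2 y3 y4 t * (phat (x, t)).2) / Jdet x1 x2 x3 x4 y1 y2 y3 y4 x t) (((((y1 - y2 + y3 - y4) / 4) * (phat (s, t)).1 + B22 y1 y2 y3 y4 s * (fderiv ℝ phat (s, t) (1, 0)).1 - B21 y1 y2 y3 y4 t * (fderiv ℝ phat (s, t) (1, 0)).2) * (B11 x1 x2 x3 x4 t * B22 y1 y2 y3 y4 s - B12 x1 x2 x3 x4 s * B21 y1 y2 y3 y4 t) - (B22 y1 y2 y3 y4 s * (phat (s, t)).1 - B21 y1 y2 y3 y4 t * (phat (s,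 t)).2) * (B11 x1 x2 x3 x4 t * ((y1 - y2 + y3 - y4) / 4) - ((x1 - x2 + x3 - x4) / 4) * B21 y1 y2 y3 y4 t)) / (B11 x1 x2 x3 x4 t * B22 y1 y2 y3 y4 s - B12 x1 x2 x3 x4 s * B21 y1 y2 y3 y4 t) ^ 2) s := by
    have h := ((hB22x.mul hu1).sub (hv1.const_mul (B21 y1 y2 y3 y4 t))).div hJx hJst
    exact h.congr_deriv (by simp only [Jdet, Pi.sub_apply, Pi.add_apply, Pi.mul_apply, Pi.neg_apply]; try ring)
  have hF2x : HasDerivAt (fun x => (-(B12 x1 x2 x3 x4 x) * (phat (x, t)).1 + B11 x1 x2 x3 x4 t * (phat (x, t)).2) / Jdet x1 x2 x3 x4 y1 y2 y3 y4 x t) (((-((x1 - x2 + x3 - x4) / 4) * (phat (s, t)).1 - B12 x1 x2 x3 x4 s * (fderiv ℝ phat (s, t) (1, 0)).1 + B11 x1 x2 x3 x4 t * (fderiv ℝ phat (s, t) (1, 0)).2) * (B11 x1 x2 x3 x4 t * B22 y1 y2 y3 y4 s - B12 x1 x2 x3 x4 s * B21 y1 y2 y3 y4 t) - (-B12 x1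 x2 x3 x4 s * (phat (s, t)).1 + B11 x1 x2 x3 x4 t * (phat (s, t)).2) * (B11 x1 x2 x3 x4 t * ((y1 - y2 + y3 - y4) / 4) - ((x1 - x2 + x3 - x4) / 4) * B21 y1 y2 y3 y4 t)) / (B11 x1 x2 x3 x4 t * B22 y1 y2 y3 y4 s - B12 x1 x2 x3 x4 s * B21 y1 y2 y3 y4 t) ^ 2) s := by
    have h := (((hB12x.neg).mul hu1).add (hv1.const_mul (B11 x1 x2 x3 x4 t))).div hJx hJst
    exact h.congr_deriv (by simp only [Jdet, Pi.sub_apply, Pi.add_apply, Pi.mul_apply, Pi.neg_apply]; try ring)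
  have hF1y : HasDerivAt (fun y => (B22 y1 y2 y3 y4 s * (phat (s, y)).1 - B21 y1 y2 y3 y4 y * (phat (s, y)).2) / Jdet x1 x2 x3 x4 y1 y2 y3 y4 s y) (((B22 y1 y2 y3 y4 s * (fderiv ℝ phat (s, t) (0, 1)).1 - ((y1 - y2 + y3 - y4) / 4) * (phat (s, t)).2 - B21 y1 y2 y3 y4 t * (fderiv ℝ phat (s, t) (0, 1)).2) * (B11 x1 x2 x3 x4 t * B22 y1 y2 y3 y4 s - B12 x1 x2 x3 x4 s * B21 y1 y2 y3 y4 t) - (B22 y1 y2 y3 y4 s * (phat (s, t)).1 - B21 y1 y2 y3 y4 t * (phat (s, t)).2) * (((x1 - x2 + x3 - x4) / 4) * B22 y1 y2 y3 y4 s - B12 x1 x2 x3 x4 s * ((y1 - y2 + y3 - y4) / 4))) / (B11 x1 x2 x3 x4 t * B22 y1 y2 y3 y4 s - B12 x1 x2 x3 x4 s * B21 y1 y2 y3 y4 t) ^ 2) t := by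
    have h := ((hu2.const_mul (B22 y1 y2 y3 y4 s)).sub (hB21y.mul hv2)).div hJy hJst
    exact h.congr_deriv (by simp only [Jdet, Pi.sub_apply, Pi.add_apply, Pi.mul_apply, Pi.neg_apply]; try ring)
  have hF2y : HasDerivAt (fun y => (-(B12 x1 x2 x3 x4 s) * (phat (s, y)).1 + B11 x1 x2 x3 x4 y * (phat (s, y)).2) / Jdet x1 x2 x3 x4 y1 y2 y3 y4 s y) (((-B12 x1 x2 x3 x4 s * (fderiv ℝ phat (s, t) (0, 1)).1 + ((x1 - x2 + x3 - x4) / 4) * (phat (s, t)).2 + B11 x1 x2 x3 x4 t * (fderiv ℝ phat (s, t) (0, 1)).2) * (B11 x1 x2 x3 x4 t * B22 y1 y2 y3 y4 s - B12 x1 x2 x3 x4 s * B21 y1 y2 y3 y4 t) - (-B12 x1 x2 x3 x4 s * (phat (s, t)).1 + B11 x1 x2 x3 x4 t * (phat (s, t)).2) * (((x1 - x2 + x3 - x4) / 4) * B22 y1 y2 y3 y4 s - B12 x1 x2 x3 x4 s * ((y1 - y2 + y3 - y4) / 4))) / (B11 x1 x2 x3 x4 t * B22 y1 y2 y3 y4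 s - B12 x1 x2 x3 x4 s * B21 y1 y2 y3 y4 t) ^ 2) t := by
    have h := ((hu2.const_mul (-(B12 x1 x2 x3 x4 s))).add (hB11y.mul hv2)).div hJy hJst
    exact h.congr_deriv (by simp only [Jdet, Pi.sub_apply, Pi.add_apply, Pi.mul_apply, Pi.neg_apply]; try ring)
  -- chain rule along the two lines
  have hg1 : HasDerivAt (fun x => Phi x1 x2 x3 x4 y1 y2 y3 y4 (x, t)) ((B11 x1 x2 x3 x4 t, B21 y1 y2 y3 y4 t) : ℝ × ℝ) s := by
    have h1 : HasDerivAt (fun x : ℝ => (1 - x) * (1 - t) / 4 * x1 + (1 + x) * (1 - t) / 4 * x2 +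
        (1 + x) * (1 + t) / 4 * x3 + (1 - x) * (1 + t) / 4 * x4) (B11 x1 x2 x3 x4 t) s :=
      (hasDerivAt_affine _ (((1 - t) * x1 + (1 - t) * x2 + (1 + t) * x3 + (1 + t) * x4) / 4) s).congr_fun'
        (fun w => by simp only [B11]; ring)
    have h2 : HasDerivAt (fun x : ℝ => (1 - x) * (1 - t) / 4 * y1 + (1 + x) * (1 - t) / 4 * y2 +
        (1 + x) * (1 + t) / 4 * y3 + (1 - x) * (1 + t) / 4 * y4) (B21 y1 y2 y3 y4 t) s :=
      (hasDerivAt_affine _ (((1 - t) * y1 + (1 - t) * y2 + (1 + t) * y3 + (1 + t) * y4) / 4) s).congr_fun'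
        (fun w => by simp only [B21]; ring)
    exact h1.prodMk h2
  have hg2 : HasDerivAt (fun y => Phi x1 x2 x3 x4 y1 y2 y3 y4 (s, y)) ((B12 x1 x2 x3 x4 s, B22 y1 y2 y3 y4 s) : ℝ × ℝ) t := by
    have h1 : HasDerivAt (fun y : ℝ => (1 - s) * (1 - y) / 4 * x1 + (1 + s) * (1 - y) / 4 * x2 +
        (1 + s) * (1 + y) / 4 * x3 + (1 - s) * (1 + y) / 4 * x4) (B12 x1 x2 x3 x4 s) t :=
      (hasDerivAt_affine _ (((1 - s) * x1 + (1 + s) * x2 + (1 + s) * x3 + (1 - s) * x4) / 4) t).congr_fun'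
        (fun w => by simp only [B12]; ring)
    have h2 : HasDerivAt (fun y : ℝ => (1 - s) * (1 - y) / 4 * y1 + (1 + s) * (1 - y) / 4 * y2 +
        (1 + s) * (1 + y) / 4 * y3 + (1 - s) * (1 + y) / 4 * y4) (B22 y1 y2 y3 y4 s) t :=
      (hasDerivAt_affine _ (((1 - s) * y1 + (1 + s) * y2 + (1 + s) * y3 + (1 - s) * y4) / 4) t).congr_fun'
        (fun w => by simp only [B22]; ring)
    exact h1.prodMk h2
  have hcomp1 := hpw.hasFDerivAt.comp_hasDerivAt s hg1
  have hcomp2 := hpw.hasFDerivAt.comp_hasDerivAt t hg2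
  have hch1 : HasDerivAt (fun x => (p (Phi x1 x2 x3 x4 y1 y2 y3 y4 (x, t))).1) ((fderiv ℝ p (Phi x1 x2 x3 x4 y1 y2 y3 y4 (s, t)) ((B11 x1 x2 x3 x4 t, B21 y1 y2 y3 y4 t) : ℝ × ℝ)).1) s := by
    simpa only [Function.comp] using hcomp1.fstR
  have hch2 : HasDerivAt (fun x => (p (Phi x1 x2 x3 x4 y1 y2 y3 y4 (x, t))).2) ((fderiv ℝ p (Phi x1 x2 x3 x4 y1 y2 y3 y4 (s, t)) ((B11 x1 x2 x3 x4 t, B21 y1 y2 y3 y4 t) : ℝ × ℝ)).2) s := by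
    simpa only [Function.comp] using hcomp1.sndR
  have hch3 : HasDerivAt (fun y => (p (Phi x1 x2 x3 x4 y1 y2 y3 y4 (s, y))).1) ((fderiv ℝ p (Phi x1 x2 x3 x4 y1 y2 y3 y4 (s, t)) ((B12 x1 x2 x3 x4 s, B22 y1 y2 y3 y4 s) : ℝ × ℝ)).1) t := by
    simpa only [Function.comp] using hcomp2.fstR
  have hch4 : HasDerivAt (fun y => (p (Phi x1 x2 x3 x4 y1 y2 y3 y4 (s, y))).2) ((fderiv ℝ p (Phi x1 x2 x3 x4 y1 y2 y3 y4 (s, t)) ((B12 x1 x2 x3 x4 s, B22 y1 y2 y3 y4 s) : ℝ × ℝ)).2) t := by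
    simpa only [Function.comp] using hcomp2.sndR
  -- the four scalar equations
  have E1 : B11 x1 x2 x3 x4 t * (fderiv ℝ p (Phi x1 x2 x3 x4 y1 y2 y3 y4 (s, t)) (1, 0)).1 + B21 y1 y2 y3 y4 t * (fderiv ℝ p (Phi x1 x2 x3 x4 y1 y2 y3 y4 (s, t)) (0, 1)).1 = ((((y1 - y2 + y3 - y4) / 4) * (phat (s, t)).1 + B22 y1 y2 y3 y4 s * (fderiv ℝ phat (s, t) (1, 0)).1 - B21 y1 y2 y3 y4 t * (fderiv ℝ phat (s, t) (1, 0)).2) * (B11 x1 x2 x3 x4 t * B22 y1 y2 y3 y4 s - B12 x1 x2 x3 x4 s * B21 y1 y2 y3 y4 t) - (B22 y1 y2 y3 y4 s * (phat (s, t)).1 - B21 y1 y2 y3 y4 t * (phat (s, t)).2) * (B11 x1 x2 x3 x4 t * ((y1 - y2 + y3 - y4) / 4) - ((x1 - x2 + x3 - x4) / 4) * B21 y1 y2 y3 y4 t)) / (B11 x1 x2 x3 x4 t * B22 y1 y2 y3 y4 s - B12 x1 x2 x3 x4 s * B21 y1 y2 y3 y4 t) ^ 2 := by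
    have h3 := hch1.unique (hF1x.congr_of_eventuallyEq hev1)
    rw [clm_fst] at h3; exact h3
  have E2 : B11 x1 x2 x3 x4 t * (fderiv ℝ p (Phi x1 x2 x3 x4 y1 y2 y3 y4 (s, t)) (1, 0)).2 + B21 y1 y2 y3 y4 t * (fderiv ℝ p (Phi x1 x2 x3 x4 y1 y2 y3 y4 (s, t)) (0, 1)).2 = ((-((x1 - x2 + x3 - x4) / 4) * (phat (s, t)).1 - B12 x1 x2 x3 x4 s * (fderiv ℝ phat (s, t) (1, 0)).1 + B11 x1 x2 x3 x4 t * (fderiv ℝ phat (s, t) (1, 0)).2) * (B11 x1 x2 x3 x4 t * B22 y1 y2 y3 y4 s - B12 x1 x2 x3 x4 s * B21 y1 y2 y3 y4 t) - (-B12 x1 x2 x3 x4 s * (phat (s, t)).1 + B11 x1 x2 x3 x4 t * (phat (s, t)).2) * (B11 x1 x2 x3 x4 t * ((y1 - y2 + y3 - y4) / 4) - ((x1 - x2 + x3 - x4) / 4) * B21 y1 y2 y3 y4 t)) / (B11 x1 x2 x3 x4 t * B22 y1 y2 y3 y4 s - B12 x1 x2 x3 x4 s * B21 y1 y2 y3 y4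 t) ^ 2 := by
    have h3 := hch2.unique (hF2x.congr_of_eventuallyEq hev2)
    rw [clm_snd] at h3; exact h3
  have E3 : B12 x1 x2 x3 x4 s * (fderiv ℝ p (Phi x1 x2 x3 x4 y1 y2 y3 y4 (s, t)) (1, 0)).1 + B22 y1 y2 y3 y4 s * (fderiv ℝ p (Phi x1 x2 x3 x4 y1 y2 y3 y4 (s, t)) (0, 1)).1 = ((B22 y1 y2 y3 y4 s * (fderiv ℝ phat (s, t) (0, 1)).1 - ((y1 - y2 + y3 - y4) / 4) * (phat (s, t)).2 - B21 y1 y2 y3 y4 t * (fderiv ℝ phat (s, t) (0, 1)).2) * (B11 x1 x2 x3 x4 t * B22 y1 y2 y3 y4 s - B12 x1 x2 x3 x4 s * B21 y1 y2 y3 y4 t) - (B22 y1 y2 y3 y4 s * (phat (s, t)).1 - B21 y1 y2 y3 y4 t * (phat (s, t)).2) * (((x1 - x2 + x3 - x4) / 4) * B22 y1 y2 y3 y4 s - B12 x1 x2 x3 x4 s * ((y1 - y2 + y3 - y4) / 4))) / (B11 x1 x2 x3 x4 t * B22 y1 y2 y3 y4 s - B12 x1 x2 x3 x4 s * B21 y1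 y2 y3 y4 t) ^ 2 := by
    have h3 := hch3.unique (hF1y.congr_of_eventuallyEq hev3)
    rw [clm_fst] at h3; exact h3
  have E4 : B12 x1 x2 x3 x4 s * (fderiv ℝ p (Phi x1 x2 x3 x4 y1 y2 y3 y4 (s, t)) (1, 0)).2 + B22 y1 y2 y3 y4 s * (fderiv ℝ p (Phi x1 x2 x3 x4 y1 y2 y3 y4 (s, t)) (0, 1)).2 = ((-B12 x1 x2 x3 x4 s * (fderiv ℝ phat (s, t) (0, 1)).1 + ((x1 - x2 + x3 - x4) / 4) * (phat (s, t)).2 + B11 x1 x2 x3 x4 t * (fderiv ℝ phat (s, t) (0, 1)).2) * (B11 x1 x2 x3 x4 t * B22 y1 y2 y3 y4 s - B12 x1 x2 x3 x4 s * B21 y1 y2 y3 y4 t) - (-B12 x1 x2 x3 x4 s * (phat (s, t)).1 + B11 x1 x2 x3 x4 t * (phat (s, t)).2) * (((x1 - x2 + x3 - x4) / 4) * B22 y1 y2 y3 y4 s - B12 x1 x2 x3 x4 s * ((y1 - y2 + y3 - y4) / 4))) / (B11 x1 x2 x3 x4 t * B22 y1 y2 y3 y4 s - B12 x1 x2 x3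 x4 s * B21 y1 y2 y3 y4 t) ^ 2 := by
    have h3 := hch4.unique (hF2y.congr_of_eventuallyEq hev4)
    rw [clm_snd] at h3; exact h3
  have final := piola_key (B11 x1 x2 x3 x4 t) (B12 x1 x2 x3 x4 s) (B21 y1 y2 y3 y4 t) (B22 y1 y2 y3 y4 s) ((x1 - x2 + x3 - x4) / 4) ((y1 - y2 + y3 - y4) / 4) (phat (s, t)).1 (phat (s, t)).2 (fderiv ℝ phat (s, t) (1, 0)).1 (fderiv ℝ phat (s, t) (0, 1)).1 (fderiv ℝ phat (s, t) (1, 0)).2 (fderiv ℝ phat (s, t) (0, 1)).2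
    ((fderiv ℝ p (Phi x1 x2 x3 x4 y1 y2 y3 y4 (s, t)) (1, 0)).1) ((fderiv ℝ p (Phi x1 x2 x3 x4 y1 y2 y3 y4 (s, t)) (0, 1)).1) ((fderiv ℝ p (Phi x1 x2 x3 x4 y1 y2 y3 y4 (s, t)) (1, 0)).2) ((fderiv ℝ p (Phi x1 x2 x3 x4 y1 y2 y3 y4 (s, t)) (0, 1)).2) hJ0 E1 E2 E3 E4
  rw [scurl_eq p _ hpw, scurl_eq phat _ hph]
  simpa only [Jdet] using final
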